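/- Fix reals S_A>0, θ>0, λ with 0<λ≤λ_th, an integer B≥1, and a prior variance V∈(0,1] with V > v_th(λ,t*). Let t° := min{t*+1, B} and S_M° := (1/√(λθ) − 1/V)·S_A·V/(1+t°·S_A·V). Then (t°, S_M°) is a global minimizer of F over {0,1,…,B}×[0,∞). -/

import Mathlib

/-- Posterior variance update: `ν̂(V,Λ) = V/(1+V·Λ)`. -/
noncomputable def nuhat (V Lam : ℝ) : ℝ := V / (1 + V * Lam)

/-- Coordinated myopic cost `F(t,S_M)`. -/
noncomputable def Fcoord (SA th lam V : ℝ) (t : ℕ) (SM : ℝ) : ℝ :=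
  nuhat V ((t : ℝ) * SA * SM / (SA + SM)) + lam * (t : ℝ) * (1 + th * SM)

/-- The threshold `v_th(λ,t)`. -/
noncomputable def vth (SA th lam : ℝ) (t : ℕ) : ℝ :=
  (Real.sqrt (lam * th) + lam * ((t : ℝ) + 1 / 2) +
      Real.sqrt lam *
        Real.sqrt (Real.sqrt (lam * th) * (2 * (t : ℝ) + 1) +
          lam * th * ((t : ℝ) + 1) * (t : ℝ) * SA + lam / 4 + 1 / SA)) /
    (1 - lam * ((t : ℝ) + 1) * (t : ℝ) * SA)

/-- Key pointwise identity: coordinated cost minus its per-`t` lower envelope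
is an explicit square over a positive denominator. -/
lemma aux_key (SA V s t SM : ℝ) (hSA : 0 < SA) (hV : 0 < V)
    (ht : 0 ≤ t) (hSM : 0 ≤ SM) :
    V / (1 + V * (t * SA * SM / (SA + SM))) + s^2*t*SM
      - (V + 2*V*t*SA*s - s^2*t*SA) / (1 + V*SA*t)
    = t * (V*SA - s*(SA + SM*(1+V*SA*t)))^2
        / ((SA + SM*(1+V*SA*t)) * (1 + V*SA*t)) := by
  have h1 : 0 < SA + SM := by linarith
  have h2 : 0 < 1 + V*SA*t := by nlinarith [mul_nonneg (mul_nonneg hV.le hSA.le) ht]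
  have h3 : 0 < SA + SM*(1+V*SA*t) := by nlinarith [mul_nonneg hSM h2.le]
  have h4 : 0 ≤ t * SA * SM / (SA + SM) :=
    div_nonneg (mul_nonneg (mul_nonneg ht hSA.le) hSM) h1.le
  have h5 : 0 < 1 + V * (t * SA * SM / (SA + SM)) := by nlinarith [mul_nonneg hV.le h4]
  field_simp
  ring

/-- Per-`t` lower envelope of the coordinated cost. -/
noncomputable def Gaux (SA V s lam : ℝ) (n : ℕ) : ℝ :=
  lam*(n:ℝ) + (V + 2*V*(n:ℝ)*SA*s - s^2*(n:ℝ)*SA)/(1+V*SA*(n:ℝ))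

/-- Discrete increment of the lower envelope. -/
lemma Gaux_step (SA V s lam : ℝ) (n : ℕ)
    (h2 : 0 < 1+V*SA*(n:ℝ)) (h3 : 0 < 1+V*SA*((n:ℝ)+1)) :
    Gaux SA V s lam n - Gaux SA V s lam (n+1)
      = (SA*(V-s)^2 - lam*((1+V*SA*(n:ℝ))*(1+V*SA*((n:ℝ)+1))))
          / ((1+V*SA*(n:ℝ))*(1+V*SA*((n:ℝ)+1))) := by
  simp only [Gaux]
  push_cast
  rw [eq_div_iff (mul_pos h2 h3).ne']
  have k1 := div_mul_cancel₀ (V + 2*V*(n:ℝ)*SA*s - s^2*(n:ℝ)*SA) h2.ne'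
  have k2 := div_mul_cancel₀ (V + 2*V*((n:ℝ)+1)*SA*s - s^2*((n:ℝ)+1)*SA) h3.ne'
  linear_combination (1+V*SA*((n:ℝ)+1)) * k1 - (1+V*SA*(n:ℝ)) * k2

set_option maxHeartbeats 1000000 in
/-- The quadratic identity relating the threshold condition to the
first decrement inequality. -/
lemma quad_id (SA V s lam Tr : ℝ) (hSA : SA ≠ 0) :
    (1 - lam*(Tr+1)*Tr*SA) * (SA*(V-s)^2 - lam*((1+V*SA*Tr)*(1+V*SA*(Tr+1))))
    = SA*(((1 - lam*(Tr+1)*Tr*SA)*V - (s + lam*(Tr+1/2)))^2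
        - lam*(s*(2*Tr+1) + s^2*(Tr+1)*Tr*SA + lam/4 + 1/SA)) := by
  have hinv : SA * (1 / SA) = 1 := mul_one_div_cancel hSA
  linear_combination lam * hinv

set_option maxHeartbeats 2000000 in
/-- if `V > v_th(λ,t*)`, then `(min{t*+1,B}, S_M°)` globally
minimizes the coordinated myopic cost over `{0,…,B}×[0,∞)`. -/
theorem stmt_3 (SA th lam V lamth : ℝ) (hSA : 0 < SA) (hth : 0 < th)
    (hlam : 0 < lam)
    (hlamth : lamth = 1 / (Real.sqrt (1 + 1 / SA) + Real.sqrt th) ^ 2)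
    (hle : lam ≤ lamth)
    (B : ℕ) (hB : 1 ≤ B) (hV0 : 0 < V) (hV1 : V ≤ 1)
    (tstar : ℕ)
    (htstar1 : lam * (tstar : ℝ) * ((tstar : ℝ) + 1) * SA < 1)
    (htstar2 : ∀ t : ℕ, lam * (t : ℝ) * ((t : ℝ) + 1) * SA < 1 → t ≤ tstar)
    (hVth : V > vth SA th lam tstar)
    (tcirc : ℕ) (htcirc : tcirc = min (tstar + 1) B)
    (SMcirc : ℝ)
    (hSMcirc : SMcirc =
      (1 / Real.sqrt (lam * th) - 1 / V) * SA * V / (1 + (tcirc : ℝ) * SA * V)) :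
    ∀ t : ℕ, t ≤ B → ∀ SM : ℝ, 0 ≤ SM →
      Fcoord SA th lam V t SM ≥ Fcoord SA th lam V tcirc SMcirc := by
  simp only [vth] at hVth
  set s := Real.sqrt (lam * th) with hs_def
  set Tr : ℝ := (tstar : ℝ) with hTr_def
  have hlth : 0 < lam * th := mul_pos hlam hth
  have hs : 0 < s := Real.sqrt_pos.mpr hlth
  have hs2 : s ^ 2 = lam * th := Real.sq_sqrt hlth.le
  have haa : 0 < V * SA := mul_pos hV0 hSA
  have hTr0 : (0:ℝ) ≤ Tr := Nat.cast_nonneg _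
  set D : ℝ := 1 - lam * (Tr + 1) * Tr * SA with hD_def
  set N : ℝ := s + lam * (Tr + 1 / 2) with hN_def
  set R : ℝ := s * (2 * Tr + 1) + lam * th * (Tr + 1) * Tr * SA + lam / 4 + 1 / SA
    with hR_def
  have hVth' : (N + Real.sqrt lam * Real.sqrt R) / D < V := hVth
  clear_value s Tr D N R
  -- basic facts about D, N, R
  have hD : 0 < D := by rw [hD_def]; nlinarith [htstar1]
  have hD1 : D ≤ 1 := by
    rw [hD_def]
    nlinarith [mul_nonneg (mul_nonneg (mul_nonneg hlam.le
      (by linarith : (0:ℝ) ≤ Tr + 1)) hTr0) hSA.le]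
  have hR0 : (0:ℝ) ≤ R := by
    rw [hR_def]
    have r1 : 0 ≤ s * (2 * Tr + 1) := mul_nonneg hs.le (by linarith)
    have r2 : 0 ≤ lam * th * (Tr + 1) * Tr * SA :=
      mul_nonneg (mul_nonneg (mul_nonneg hlth.le (by linarith)) hTr0) hSA.le
    have r3 : 0 < 1 / SA := by positivity
    linarith
  have hq0 : 0 ≤ Real.sqrt lam * Real.sqrt R :=
    mul_nonneg (Real.sqrt_nonneg _) (Real.sqrt_nonneg _)
  have h6 : N + Real.sqrt lam * Real.sqrt R < D * V := by
    rw [div_lt_iff₀ hD] at hVth'; linarith [hVth']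
  have hN0 : s ≤ N := by
    rw [hN_def]; nlinarith [mul_nonneg hlam.le (by linarith : (0:ℝ) ≤ Tr + 1/2)]
  have h7 : D * V ≤ V := by nlinarith [mul_nonneg (sub_nonneg.mpr hD1) hV0.le]
  have hsV : s < V := by linarith
  have h10 : (Real.sqrt lam * Real.sqrt R) ^ 2 = lam * R := by
    rw [mul_pow, Real.sq_sqrt hlam.le, Real.sq_sqrt hR0]
  have hsq : lam * R < (D * V - N) ^ 2 := by
    have h8 : Real.sqrt lam * Real.sqrt R < D * V - N := by linarith
    calc lam * R = (Real.sqrt lam * Real.sqrt R) ^ 2 := h10.symm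
      _ < (D * V - N) ^ 2 := pow_lt_pow_left₀ h8 hq0 (by norm_num)
  have hR' : R = s * (2 * Tr + 1) + s^2 * (Tr + 1) * Tr * SA + lam / 4 + 1 / SA := by
    rw [hR_def, hs2]
  -- the key decrement inequality at t = tstar
  have hA : lam * ((1 + V*SA*Tr) * (1 + V*SA*(Tr+1))) < SA * (V - s)^2 := by
    have hid := quad_id SA V s lam Tr hSA.ne'
    rw [← hD_def, ← hN_def, ← hR'] at hid
    have hP : 0 < SA * ((D * V - N)^2 - lam * R) := mul_pos hSA (by linarith)
    have hDX : 0 < D * (SA*(V-s)^2 - lam*((1+V*SA*Tr)*(1+V*SA*(Tr+1)))) := by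
      rw [hid]; exact hP
    by_contra hcon
    push_neg at hcon
    have h9 : 0 ≤ D * (lam * ((1 + V*SA*Tr) * (1 + V*SA*(Tr+1))) - SA*(V-s)^2) :=
      mul_nonneg hD.le (by linarith)
    nlinarith [hDX, h9]
  -- lower envelope facts
  have hden : ∀ x : ℝ, 0 ≤ x → 0 < 1 + V*SA*x := by
    intro x hx; nlinarith [mul_nonneg haa.le hx]
  have hdec : ∀ n : ℕ, n ≤ tstar → Gaux SA V s lam (n+1) ≤ Gaux SA V s lam n := by
    intro n hn
    have hn' : (n:ℝ) ≤ Tr := by rw [hTr_def]; exact_mod_cast hn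
    have hn0 : (0:ℝ) ≤ (n:ℝ) := Nat.cast_nonneg n
    have hd1 : 0 < 1 + V*SA*(n:ℝ) := hden _ hn0
    have hd2 : 0 < 1 + V*SA*((n:ℝ)+1) := hden _ (by linarith)
    have hnum : lam * ((1+V*SA*(n:ℝ))*(1+V*SA*((n:ℝ)+1))) ≤ SA*(V-s)^2 := by
      nlinarith [hA, mul_nonneg (mul_nonneg (mul_nonneg hlam.le haa.le)
        (sub_nonneg.mpr hn'))
        (by nlinarith [mul_nonneg haa.le (by linarith : (0:ℝ) ≤ Tr + (n:ℝ) + 1)] :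
          (0:ℝ) ≤ 2 + V*SA*(Tr + (n:ℝ) + 1))]
    have hid := Gaux_step SA V s lam n hd1 hd2
    have hdd : 0 < (1+V*SA*(n:ℝ))*(1+V*SA*((n:ℝ)+1)) := mul_pos hd1 hd2
    have hnn : 0 ≤ (SA*(V-s)^2 - lam*((1+V*SA*(n:ℝ))*(1+V*SA*((n:ℝ)+1))))
        / ((1+V*SA*(n:ℝ))*(1+V*SA*((n:ℝ)+1))) := div_nonneg (by linarith) hdd.le
    linarith [hid]
  have hinc : ∀ n : ℕ, tstar + 1 ≤ n → Gaux SA V s lam n ≤ Gaux SA V s lam (n+1) := by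
    intro n hn
    have hn0 : (0:ℝ) ≤ (n:ℝ) := Nat.cast_nonneg n
    have hd1 : 0 < 1 + V*SA*(n:ℝ) := hden _ hn0
    have hd2 : 0 < 1 + V*SA*((n:ℝ)+1) := hden _ (by linarith)
    have h1 : 1 ≤ lam * (n:ℝ) * ((n:ℝ)+1) * SA := by
      by_contra h
      push_neg at h
      exact absurd (htstar2 n h) (by omega)
    have h2 : SA*V^2 ≤ lam * (n:ℝ) * ((n:ℝ)+1) * SA * (SA*V^2) :=
      le_mul_of_one_le_left (by positivity) h1
    have h3 : SA*(V-s)^2 ≤ SA*V^2 := by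
      nlinarith [mul_nonneg (mul_nonneg hSA.le hs.le) (by linarith : (0:ℝ) ≤ 2*V - s)]
    have h4' : (0:ℝ) ≤ 1 + V*SA*(2*(n:ℝ)+1) := by
      nlinarith [mul_nonneg haa.le (by linarith : (0:ℝ) ≤ 2*(n:ℝ)+1)]
    have h4 : 0 ≤ lam * (1 + V*SA*(2*(n:ℝ)+1)) := mul_nonneg hlam.le h4'
    have hnum : SA*(V-s)^2 ≤ lam * ((1+V*SA*(n:ℝ))*(1+V*SA*((n:ℝ)+1))) := by
      nlinarith [h2, h3, h4]
    have hid := Gaux_step SA V s lam n hd1 hd2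
    have hdd : 0 < (1+V*SA*(n:ℝ))*(1+V*SA*((n:ℝ)+1)) := mul_pos hd1 hd2
    have hnn : (SA*(V-s)^2 - lam*((1+V*SA*(n:ℝ))*(1+V*SA*((n:ℝ)+1))))
        / ((1+V*SA*(n:ℝ))*(1+V*SA*((n:ℝ)+1))) ≤ 0 :=
      div_nonpos_of_nonpos_of_nonneg (by linarith) hdd.le
    linarith [hid]
  -- rewriting Fcoord via s
  have hF : ∀ (t : ℕ) (SM : ℝ), Fcoord SA th lam V t SM
      = V / (1 + V * ((t:ℝ) * SA * SM / (SA + SM))) + lam*(t:ℝ)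
        + s^2*(t:ℝ)*SM := by
    intro t SM
    simp only [Fcoord, nuhat]
    linear_combination (-((t:ℝ) * SM)) * hs2
  -- lower bound: F(t,SM) ≥ G(t)
  have hlb : ∀ (t : ℕ) (SM : ℝ), 0 ≤ SM →
      Gaux SA V s lam t ≤ Fcoord SA th lam V t SM := by
    intro t SM hSM
    have hk := aux_key SA V s (t:ℝ) SM hSA hV0 (Nat.cast_nonneg t) hSM
    have hd1 : 0 < 1 + V*SA*(t:ℝ) := hden _ (Nat.cast_nonneg t)
    have h3 : 0 < SA + SM*(1+V*SA*(t:ℝ)) := by nlinarith [mul_nonneg hSM hd1.le]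
    have hpos : 0 ≤ (t:ℝ) * (V*SA - s*(SA + SM*(1+V*SA*(t:ℝ))))^2
        / ((SA + SM*(1+V*SA*(t:ℝ))) * (1 + V*SA*(t:ℝ))) := by
      apply div_nonneg _ (mul_pos h3 hd1).le
      exact mul_nonneg (Nat.cast_nonneg t) (sq_nonneg _)
    rw [hF t SM]
    simp only [Gaux]
    linarith [hk, hpos]
  -- SMcirc is admissible and attains the envelope
  have htc0 : (0:ℝ) ≤ (tcirc:ℝ) := Nat.cast_nonneg tcirc
  have htcd : 0 < 1 + (tcirc:ℝ) * SA * V := by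
    nlinarith [mul_nonneg (mul_nonneg htc0 hSA.le) hV0.le]
  have hSMc0 : 0 ≤ SMcirc := by
    rw [hSMcirc]
    apply div_nonneg _ htcd.le
    apply mul_nonneg (mul_nonneg _ hSA.le) hV0.le
    rw [sub_nonneg]
    rw [div_le_div_iff₀ hV0 hs]
    linarith
  have heq : Fcoord SA th lam V tcirc SMcirc = Gaux SA V s lam tcirc := by
    have hx : V*SA - s*(SA + SMcirc*(1+V*SA*(tcirc:ℝ))) = 0 := by
      rw [hSMcirc]
      field_simp
      ring
    have hk := aux_key SA V s (tcirc:ℝ) SMcirc hSA hV0 htc0 hSMc0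
    rw [hx] at hk
    norm_num at hk
    rw [hF tcirc SMcirc]
    simp only [Gaux]
    linarith [hk]
  -- G is minimized at tcirc over {0,…,B}
  have htcle : tcirc ≤ tstar + 1 := by omega
  have hdown : ∀ m n : ℕ, n + m = tcirc → Gaux SA V s lam tcirc ≤ Gaux SA V s lam n := by
    intro m
    induction m with
    | zero => intro n h; simp only [Nat.add_zero] at h; rw [h]
    | succ k ih =>
        intro n h
        have h1 : (n+1) + k = tcirc := by omega
        have h2 : n ≤ tstar := by omega
        exact le_trans (ih (n+1) h1) (hdec n h2)
  have hup2 : ∀ n : ℕ, tcirc ≤ n → n ≤ B → Gaux SA V s lam tcirc ≤ Gaux SA V s lam n := by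
    intro n
    induction n with
    | zero => intro h _; rw [Nat.le_zero.mp h]
    | succ k ih =>
        intro h hB'
        rcases Nat.eq_or_lt_of_le h with heq' | hlt
        · rw [← heq']
        · have hk1 : tcirc ≤ k := by omega
          have hk2 : tstar + 1 ≤ k := by omega
          exact le_trans (ih hk1 (by omega)) (hinc k hk2)
  -- conclusion
  intro t htB SM hSM
  have hGG : Gaux SA V s lam tcirc ≤ Gaux SA V s lam t := by
    rcases le_or_gt t tcirc with h | h
    · exact hdown (tcirc - t) t (by omega)
    · exact hup2 t h.le htB
  have := hlb t SM hSM
  rw [ge_iff_le, heq]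
  linarith
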